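/- For any base class F ⊆ {0,1}^{ {0,1}* } and generation length T, the growth function of the end-to-end class satisfies Γ_{F^{e2e(T)}}(m) ≤ Γ_F(m · 2^T) for all m. -/

import Mathlib

/-- apply-and-append map: `f̄(x) = append(x, f(x))`. -/
def applyAppend (f : List Bool → Bool) (x : List Bool) : List Bool := x ++ [f x]

/-- chain-of-thought map: `f̄` iterated `T` times. -/
def cot (f : List Bool → Bool) (T : ℕ) (x : List Bool) : List Bool :=
  (applyAppend f)^[T] x

/-- end-to-end map: last token of the chain of thought. -/
def e2e (f : List Bool → Bool) (T : ℕ) (x : List Bool) : Bool :=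
  (cot f T x).getLastD false

/-- end-to-end class `F^{e2e(T)}`. -/
def e2eClass (F : Set (List Bool → Bool)) (T : ℕ) : Set (List Bool → Bool) :=
  (fun f => e2e f T) '' F

/-- growth function of a class of `{0,1}`-valued functions on `{0,1}*`:
the maximal number of distinct behavior vectors on `m` points. -/
noncomputable def growth (H : Set (List Bool → Bool)) (m : ℕ) : ℕ :=
  sSup {n | ∃ x : Fin m → List Bool,
    n = Set.ncard ((fun h => fun i => h (x i)) '' H)}

/-! ### Auxiliary encoding of short words into `Fin (2^T)` -/

def myEnc : List Bool → ℕ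
  | [] => 0
  | (b :: t) => 2 * myEnc t + (if b then 2 else 1)

def myDec : ℕ → List Bool
  | 0 => []
  | (n+1) =>
    if (n+1) % 2 = 1 then false :: myDec ((n+1)/2)
    else true :: myDec ((n+1)/2 - 1)
  decreasing_by all_goals omega

lemma myEnc_false (t : List Bool) : myEnc (false :: t) = 2 * myEnc t + 1 := by simp [myEnc]
lemma myEnc_true (t : List Bool) : myEnc (true :: t) = 2 * myEnc t + 2 := by simp [myEnc]

lemma myDec_myEnc (w : List Bool) : myDec (myEnc w) = w := by
  induction w with
  | nil => simp [myEnc, myDec]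
  | cons b t ih =>
    cases b
    · rw [myEnc_false]
      have h1 : (2 * myEnc t + 1) % 2 = 1 := by omega
      have h2 : (2 * myEnc t + 1) / 2 = myEnc t := by omega
      rw [myDec, h1, h2]
      simp [ih]
    · rw [myEnc_true, show 2 * myEnc t + 2 = (2 * myEnc t + 1) + 1 from rfl, myDec]
      have h1 : ¬((2 * myEnc t + 1 + 1) % 2 = 1) := by omega
      have h2 : (2 * myEnc t + 1 + 1) / 2 - 1 = myEnc t := by omega
      rw [if_neg h1, h2]
      simp [ih]

lemma myEnc_add_two_le (w : List Bool) : myEnc w + 2 ≤ 2 ^ (w.length + 1) := by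
  induction w with
  | nil => simp [myEnc]
  | cons b t ih =>
    have h2 : (2:ℕ) ^ (t.length + 1 + 1) = 2 * 2 ^ (t.length + 1) := by ring
    simp only [List.length_cons, h2]
    cases b
    · rw [myEnc_false]; omega
    · rw [myEnc_true]; omega

lemma myEnc_lt {w : List Bool} {T : ℕ} (h : w.length < T) : myEnc w < 2 ^ T := by
  have h1 := myEnc_add_two_le w
  have h2 : (2:ℕ) ^ (w.length + 1) ≤ 2 ^ T := Nat.pow_le_pow_right (by norm_num) h
  omega

/-- the chain of thought is determined by the values of `f` on `x ++ w`, `|w| < T`. -/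
lemma cot_congr (T : ℕ) (f g : List Bool → Bool) (x : List Bool)
    (h : ∀ w : List Bool, w.length < T → f (x ++ w) = g (x ++ w)) :
    cot f T x = cot g T x := by
  induction T generalizing x with
  | zero => rfl
  | succ T ih =>
    have hfx : f x = g x := by simpa using h [] (by simp)
    have h1 : cot f (T+1) x = cot f T (x ++ [f x]) := by
      simp [cot, Function.iterate_succ_apply, applyAppend]
    have h2 : cot g (T+1) x = cot g T (x ++ [f x]) := by
      simp [cot, Function.iterate_succ_apply, applyAppend, ← hfx]
    rw [h1, h2]
    apply ih
    intro w hw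
    rw [List.append_assoc]
    exact h (f x :: w) (by simpa using hw)

/-- `Γ_{F^{e2e(T)}}(m) ≤ Γ_F(m · 2^T)` for all `m`. -/
theorem growth_e2eClass_le (F : Set (List Bool → Bool)) (T : ℕ) (m : ℕ) :
    growth (e2eClass F T) m ≤ growth F (m * 2 ^ T) := by
  set N := m * 2 ^ T with hN
  apply csSup_le
  · exact ⟨_, fun _ => [], rfl⟩
  rintro n ⟨x, rfl⟩
  -- build the evaluation points for `F`
  have hpow : 0 < 2 ^ T := Nat.pow_pos (by norm_num)
  set y : Fin N → List Bool := fun k =>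
    x ⟨(k : ℕ) / 2 ^ T, by
      exact Nat.div_lt_of_lt_mul (Nat.lt_of_lt_of_eq k.isLt (Nat.mul_comm m (2 ^ T)))⟩
      ++ myDec ((k : ℕ) % 2 ^ T) with hy
  set restr : (List Bool → Bool) → (Fin N → Bool) := fun f k => f (y k) with hrestr
  set vec : (List Bool → Bool) → (Fin m → Bool) := fun f i => e2e f T (x i) with hvec
  -- coverage: every `x i ++ w` with `|w| < T` occurs among the `y k`
  have hcover : ∀ (i : Fin m) (w : List Bool), w.length < T →
      ∃ k : Fin N, y k = x i ++ w := by
    intro i w hw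
    have hlt : 2 ^ T * (i : ℕ) + myEnc w < N := by
      have h1 : myEnc w < 2 ^ T := myEnc_lt hw
      have h2 : (i : ℕ) + 1 ≤ m := i.isLt
      calc 2 ^ T * (i : ℕ) + myEnc w < 2 ^ T * ((i : ℕ) + 1) := by
            rw [Nat.mul_add, Nat.mul_one]; omega
        _ ≤ 2 ^ T * m := Nat.mul_le_mul_left _ h2
        _ = N := by rw [hN, Nat.mul_comm]
    refine ⟨⟨2 ^ T * (i : ℕ) + myEnc w, hlt⟩, ?_⟩
    have hdiv : (2 ^ T * (i : ℕ) + myEnc w) / 2 ^ T = (i : ℕ) := by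
      rw [Nat.mul_add_div hpow, Nat.div_eq_of_lt (myEnc_lt hw), Nat.add_zero]
    have hmod : (2 ^ T * (i : ℕ) + myEnc w) % 2 ^ T = myEnc w := by
      rw [Nat.mul_add_mod, Nat.mod_eq_of_lt (myEnc_lt hw)]
    simp only [hy]
    congr 1
    · congr 1
      exact Fin.ext hdiv
    · rw [hmod, myDec_myEnc]
  -- key: the restriction to `y` determines the e2e behavior on `x`
  have hkey : ∀ f g : List Bool → Bool, restr f = restr g → vec f = vec g := by
    intro f g hfg
    funext i
    simp only [hvec, e2e]
    congr 1
    apply cot_congr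
    intro w hw
    obtain ⟨k, hk⟩ := hcover i w hw
    rw [← hk]
    exact congrFun hfg k
  -- the comparison map between behavior sets
  classical
  set G : (Fin N → Bool) → (Fin m → Bool) := fun v =>
    if h : ∃ f ∈ F, restr f = v then vec h.choose else (fun _ => false) with hG
  have hsub : ((fun h => fun i => h (x i)) '' e2eClass F T) ⊆
      G '' ((fun h => fun k => h (y k)) '' F) := by
    rintro v ⟨h, ⟨f, hfF, rfl⟩, rfl⟩
    refine ⟨restr f, ⟨f, hfF, rfl⟩, ?_⟩
    have hex : ∃ f' ∈ F, restr f' = restr f := ⟨f, hfF, rfl⟩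
    rw [hG]
    simp only [dif_pos hex]
    have := hkey hex.choose f hex.choose_spec.2
    rw [this]
  have hfin : ((fun h => fun k => h (y k)) '' F).Finite := Set.toFinite _
  calc ((fun h => fun i => h (x i)) '' e2eClass F T).ncard
      ≤ (G '' ((fun h => fun k => h (y k)) '' F)).ncard := by
        apply Set.ncard_le_ncard hsub (hfin.image G)
    _ ≤ ((fun h => fun k => h (y k)) '' F).ncard := Set.ncard_image_le hfin
    _ ≤ growth F N := by
        apply le_csSup
        · refine ⟨Fintype.card (Fin N → Bool), ?_⟩
          rintro n ⟨z, rfl⟩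
          calc ((fun h => fun i => h (z i)) '' F).ncard
              ≤ (Set.univ : Set (Fin N → Bool)).ncard :=
                Set.ncard_le_ncard (Set.subset_univ _) Set.finite_univ
            _ = Fintype.card (Fin N → Bool) := by
                rw [Set.ncard_univ, Nat.card_eq_fintype_card]
        · exact ⟨y, rfl⟩
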